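/- For the all-but subtraction game with excluded set X = {a} (a a positive integer), the Grundy sequence satisfies G(n + 2a) = G(n) + a for all n ∈ ℕ; concretely, G is purely arithmetic periodic with period 2a and saltus a. -/

import Mathlib

/-- The minimum excludant of a set of naturals. -/
noncomputable def mex (S : Set ℕ) : ℕ := sInf {m | m ∉ S}

/-- `G` is the Grundy (nim) sequence of the all-but subtraction game with
excluded set `X`: `G n = mex { G (n - t) : t > 0, t ∉ X, t ≤ n }`. -/
def IsGrundy (X : Set ℕ) (G : ℕ → ℕ) : Prop :=
  ∀ n, G n = mex {m | ∃ t, 0 < t ∧ t ∉ X ∧ t ≤ n ∧ G (n - t) = m}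

private lemma mex_eq_of {S : Set ℕ} {k : ℕ} (h1 : k ∉ S) (h2 : ∀ m, m < k → m ∈ S) :
    mex S = k := by
  unfold mex
  have hk : k ∈ {m | m ∉ S} := h1
  refine le_antisymm (Nat.sInf_le hk) ?_
  refine le_csInf ⟨k, hk⟩ ?_
  intro m hm
  by_contra h
  push_neg at h
  exact hm (h2 m h)

/-- The closed form of the Grundy sequence. -/
private def F (a n : ℕ) : ℕ := a * (n / (2 * a)) + n % a

private lemma Fval (a j s : ℕ) (ha : 0 < a) (hs : s < a) :
    F a (2 * a * j + s) = a * j + s := by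
  have h2a : 0 < 2 * a := by omega
  have hdiv : (2 * a * j + s) / (2 * a) = j := by
    rw [Nat.mul_add_div h2a, Nat.div_eq_of_lt (by omega)]; omega
  have hmod : (2 * a * j + s) % a = s := by
    have h3 : 2 * a * j + s = a * (2 * j) + s := by ring
    rw [h3, Nat.mul_add_mod, Nat.mod_eq_of_lt hs]
  rw [F, hdiv, hmod]

private lemma parts {a x y s t : ℕ} (ha : 0 < a) (hs : s < a) (ht : t < a)
    (h : a * x + s = a * y + t) : x = y ∧ s = t := by
  have h1 : (a * x + s) % a = s := by rw [Nat.mul_add_mod, Nat.mod_eq_of_lt hs]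
  have h2 : (a * y + t) % a = t := by rw [Nat.mul_add_mod, Nat.mod_eq_of_lt ht]
  have hst : s = t := by rw [← h1, ← h2, h]
  subst hst
  exact ⟨Nat.eq_of_mul_eq_mul_left ha (by omega), rfl⟩

private lemma key (a : ℕ) (ha : 0 < a) (G : ℕ → ℕ) (hG : IsGrundy {a} G) :
    ∀ n, G n = F a n := by
  intro n
  induction n using Nat.strong_induction_on with
  | _ n IH =>
  have h2a : 0 < 2 * a := by omega
  rw [hG n]
  apply mex_eq_of
  · -- F a n is not a value of a reachable position
    rintro ⟨t, ht0, hta, htn, heq⟩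
    simp only [Set.mem_singleton_iff] at hta
    have hmlt : n - t < n := by omega
    rw [IH _ hmlt] at heq
    set m := n - t with hmdef
    obtain ⟨hq, hr⟩ := parts ha (Nat.mod_lt _ ha) (Nat.mod_lt _ ha) heq
    have e1 := Nat.div_add_mod n (2 * a)
    have e2 := Nat.div_add_mod m (2 * a)
    rw [hq] at e2
    have hY : n % (2 * a) < 2 * a := Nat.mod_lt _ h2a
    obtain ⟨X, Y, Z, hXY, hXZ, hYlt⟩ :
        ∃ X Y Z, X + Y = n ∧ X + Z = m ∧ Y < 2 * a := ⟨_, _, _, e1, e2, hY⟩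
    have ht2a : t < 2 * a := by omega
    have hmn : m ≤ n := by omega
    have hd : a ∣ n - m := (Nat.modEq_iff_dvd' hmn).mp hr
    have htval : t = n - m := by omega
    obtain ⟨k, hk⟩ := hd
    rw [← htval] at hk
    have hk2 : k < 2 := by
      by_contra hcon
      push_neg at hcon
      have h5 : a * 2 ≤ a * k := Nat.mul_le_mul_left a hcon
      rw [← hk] at h5
      omega
    interval_cases k <;> omega
  · -- every value below F a n is attained
    intro v hv
    rw [show F a n = a * (n / (2 * a)) + n % a from rfl] at hv
    obtain ⟨j, s, hs, hvjs⟩ : ∃ j s, s < a ∧ a * j + s = v :=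
      ⟨_, _, Nat.mod_lt _ ha, Nat.div_add_mod v a⟩
    have e1 := Nat.div_add_mod n (2 * a)
    have hr2 : n % a ≤ n % (2 * a) := by
      have h := Nat.mod_mod_of_dvd n (show a ∣ 2 * a from ⟨2, by ring⟩)
      calc n % a = n % (2 * a) % a := h.symm
        _ ≤ n % (2 * a) := Nat.mod_le _ _
    have hna : n % a < a := Nat.mod_lt _ ha
    have hqd : n / (2 * a) = n / (2 * a) := rfl
    generalize hqdef : n / (2 * a) = q at hv e1
    have hFm : F a (2 * a * j + s) = a * j + s := Fval a j s ha hs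
    -- m < n
    have hmn : 2 * a * j + s < n := by
      rcases lt_or_ge j q with hjq | hjq
      · have h1 : 2 * a * (j + 1) ≤ 2 * a * q := Nat.mul_le_mul_left _ (by omega)
        rw [Nat.mul_add, Nat.mul_one] at h1
        calc 2 * a * j + s < 2 * a * j + 2 * a := by
              exact Nat.add_lt_add_left (by omega) _
          _ ≤ 2 * a * q := h1
          _ ≤ n := Nat.le.intro e1
      · have hjq' : j = q := by
          rcases Nat.eq_or_lt_of_le hjq with h | h
          · exact h.symm
          · exfalso
            have h1 : a * (q + 1) ≤ a * j := Nat.mul_le_mul_left a h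
            rw [Nat.mul_add, Nat.mul_one] at h1
            linarith
        subst hjq'
        have hsn : s < n % a := by linarith
        calc 2 * a * j + s < 2 * a * j + n % (2 * a) :=
              Nat.add_lt_add_left (by omega) _
          _ = n := e1
    refine ⟨n - (2 * a * j + s), by omega, ?_, by omega, ?_⟩
    · -- n - m ≠ a
      simp only [Set.mem_singleton_iff]
      intro hcon
      have hn' : n = 2 * a * j + (s + a) := by omega
      have hdiv : n / (2 * a) = j := by
        rw [hn', Nat.mul_add_div h2a, Nat.div_eq_of_lt (by omega)]; omega
      have hmod : n % a = s := by
        have h3 : n = a * (2 * j + 1) + s := by rw [hn']; ring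
        rw [h3, Nat.mul_add_mod, Nat.mod_eq_of_lt hs]
      have hcontr : a * q + n % a = v := by
        rw [← hqdef, hdiv, hmod, hvjs]
      linarith
    · rw [show n - (n - (2 * a * j + s)) = 2 * a * j + s by omega,
        IH _ hmn, hFm, hvjs]

theorem stmt_8 (a : ℕ) (ha : 0 < a)
    (G : ℕ → ℕ) (hG : IsGrundy {a} G) :
    ∀ n, G (n + 2 * a) = G n + a := by
  intro n
  have h2a : 0 < 2 * a := by omega
  rw [key a ha G hG, key a ha G hG]
  have hdiv : (n + 2 * a) / (2 * a) = n / (2 * a) + 1 := Nat.add_div_right n h2a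
  have hmod : (n + 2 * a) % a = n % a := by
    have h3 : n + 2 * a = n + a * 2 := by ring
    rw [h3, Nat.add_mul_mod_self_left]
  rw [F, F, hdiv, hmod, Nat.mul_add, Nat.mul_one]
  ring
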